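/- arXiv:1306.4026 — 3 statements merged into one kernel-verified Lean document; each statement's English description precedes it below -/
import Mathlib

section
/- Let P be the group on F_q × F_q with multiplication (a₁,b₁)*(a₂,b₂) = (a₁+a₂, b₁+b₂+a₁a₂^θ), where q = 2^(2n+1), n ≥ 1, θ = 2^(n+1). Then the subgroup generated by squares of elements of P equals the center Z(P). -/
set_option linter.unusedSectionVars false
section aux
variable {F : Type*} [Field F] [Fintype F] [CharP F 2] (n : ℕ)

private lemma szp_coprime (hcard : Fintype.card F = 2 ^ (2 * n + 1)) :
    Nat.Coprime (Nat.card Fˣ) (1 + 2 ^ (n + 1)) := by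
  have hcu : Nat.card Fˣ = 2 ^ (2*n+1) - 1 := by
    rw [Nat.card_units, Nat.card_eq_fintype_card, hcard]
  have h1 : (1:ℕ) ≤ 2^(n+1) := Nat.one_le_two_pow
  have h2 : (1:ℕ) ≤ 2^(2*n+1) := Nat.one_le_two_pow
  have hsq : (2:ℕ)^(n+1) * 2^(n+1) = 2 * 2^(2*n+1) := by
    rw [← pow_add, ← pow_succ']; ring_nf
  have key : (2^(n+1) + 1) * (2^(n+1) - 1) = 2 * (2^(2*n+1) - 1) + 1 := by
    have : ((2:ℕ)^(n+1) + 1) * (2^(n+1) - 1) = 2^(n+1) * 2^(n+1) - 1 := by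
      rcases Nat.exists_eq_add_of_le h1 with ⟨k, hk⟩
      rw [hk]
      have e1 : (1+k+1)*(1+k-1) = k*k+2*k := by
        rw [Nat.add_sub_cancel_left]; ring
      have e2 : (1+k)*(1+k) = k*k+2*k+1 := by ring
      omega
    omega
  rw [hcu, Nat.coprime_comm]
  apply Nat.coprime_of_mul_modEq_one (2^(n+1) - 1)
  rw [add_comm 1, key]
  exact ((Nat.modEq_iff_dvd' (by omega)).mpr ⟨2, by omega⟩).symm

private lemma szp_surj (hcard : Fintype.card F = 2 ^ (2 * n + 1)) (b : F) :
    ∃ a : F, a ^ (1 + 2 ^ (n + 1)) = b := by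
  rcases eq_or_ne b 0 with rfl | hb
  · exact ⟨0, zero_pow (by positivity)⟩
  · obtain ⟨u, hu⟩ := (Nat.Coprime.pow_left_bijective (szp_coprime n hcard)).2 (Units.mk0 b hb)
    have hu' : u ^ (1 + 2 ^ (n + 1)) = Units.mk0 b hb := hu
    exact ⟨u, by rw [← Units.val_pow_eq_pow_val, hu', Units.val_mk0]⟩
end aux

@[ext]
structure SzP (F : Type*) (n : ℕ) where
  a : F
  b : F

namespace SzP

set_option linter.unusedSectionVars false

variable {F : Type*} [Field F] [CharP F 2] {n : ℕ}

instance : Mul (SzP F n) := ⟨fun x y => ⟨x.a + y.a, x.b + y.b + x.a * y.a ^ (2 ^ (n + 1))⟩⟩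
instance : One (SzP F n) := ⟨⟨0, 0⟩⟩
instance : Inv (SzP F n) := ⟨fun x => ⟨x.a, x.b + x.a ^ (1 + 2 ^ (n + 1))⟩⟩

@[simp] lemma mul_a (x y : SzP F n) : (x * y).a = x.a + y.a := rfl
@[simp] lemma mul_b (x y : SzP F n) : (x * y).b = x.b + y.b + x.a * y.a ^ (2 ^ (n + 1)) := rfl
@[simp] lemma one_a : (1 : SzP F n).a = 0 := rfl
@[simp] lemma one_b : (1 : SzP F n).b = 0 := rfl
@[simp] lemma inv_a (x : SzP F n) : (x⁻¹).a = x.a := rfl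
@[simp] lemma inv_b (x : SzP F n) : (x⁻¹).b = x.b + x.a ^ (1 + 2 ^ (n + 1)) := rfl

instance instGroup : Group (SzP F n) :=
  Group.ofLeftAxioms
    (fun x y z => by
      have h : ∀ u v : F, (u + v) ^ 2 ^ (n + 1) = u ^ 2 ^ (n + 1) + v ^ 2 ^ (n + 1) :=
        fun u v => add_pow_char_pow u v 2 (n+1)
      ext <;> simp [h] <;> ring)
    (fun x => by ext <;> simp)
    (fun x => by
      ext
      · simp [CharTwo.add_self_eq_zero]
      · simp only [mul_b, inv_b, inv_a, one_b, pow_add, pow_one]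
        ring_nf
        simp [CharTwo.two_eq_zero])

end SzP

theorem SzP.closure_squares_eq_center (n : ℕ) (hn : 1 ≤ n)
    (F : Type*) [Field F] [Fintype F] [CharP F 2]
    (hcard : Fintype.card F = 2 ^ (2 * n + 1)) :
    Subgroup.closure {y : SzP F n | ∃ x : SzP F n, x ^ 2 = y} =
      Subgroup.center (SzP F n) := by
  have hθ0 : (2:ℕ)^(n+1) ≠ 0 := by positivity
  apply le_antisymm
  · rw [Subgroup.closure_le]
    rintro y ⟨x, rfl⟩
    rw [SetLike.mem_coe, Subgroup.mem_center_iff]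
    intro g
    have ha : (x^2).a = 0 := by
      rw [pow_two]; simp [CharTwo.add_self_eq_zero]
    ext
    · simp [ha, add_comm]
    · simp [ha, zero_pow hθ0]
      ring
  · intro z hz
    rw [Subgroup.mem_center_iff] at hz
    have hcomm : ∀ c : F, c * z.a ^ (2^(n+1)) = z.a * c ^ (2^(n+1)) := by
      intro c
      have := congrArg SzP.b (hz ⟨c, 0⟩)
      simp only [mul_b] at this
      -- this : c.b stuff
      linear_combination this
    have hza : z.a = 0 := by
      by_contra h
      have hfix : z.a ^ (2^(n+1)) = z.a := by
        have := hcomm 1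
        simpa using this
      have hall : ∀ c : F, c ^ (2^(n+1)) = c := by
        intro c
        have h1 := hcomm c
        rw [hfix] at h1
        have h2 : z.a * c = z.a * c ^ (2^(n+1)) := by rw [← h1, mul_comm]
        exact (mul_left_cancel₀ h h2).symm
      have hall2 : ∀ c : F, c ^ (2:ℕ) = c := by
        intro c
        have h1 : (c ^ (2^(n+1))) ^ (2^(n+1)) = c := by rw [hall, hall]
        rw [← pow_mul, ← pow_add] at h1
        have h2 : c ^ (2^(2*n+1)) = c := by
          rw [← hcard]; exact FiniteField.pow_card c
        have h3 : (n+1) + (n+1) = (2*n+1) + 1 := by ring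
        rw [h3, pow_succ, pow_mul, h2] at h1
        exact h1
      -- every element is 0 or 1, contradicting card ≥ 8
      classical
      have hsub : (Finset.univ : Finset F) ⊆ {0, 1} := by
        intro c _
        have := hall2 c
        have hc : c * (c - 1) = 0 := by ring_nf; linear_combination (hall2 c)
        rcases mul_eq_zero.mp hc with h | h
        · simp [h]
        · simp [sub_eq_zero.mp h]
      have hle := Finset.card_le_card hsub
      rw [Finset.card_univ, hcard] at hle
      have : (2:ℕ)^(2*n+1) ≥ 2^3 := Nat.pow_le_pow_right (by norm_num) (by omega)
      have h01 : ({0, 1} : Finset F).card ≤ 2 := Finset.card_insert_le _ _ |>.trans (by simp)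
      omega
    -- z has a = 0; exhibit it as a square
    obtain ⟨a, hab⟩ := szp_surj n hcard z.b
    apply Subgroup.subset_closure
    refine ⟨⟨a, 0⟩, ?_⟩
    rw [pow_two]
    ext
    · simp [hza, CharTwo.add_self_eq_zero]
    · simp only [mul_b]
      rw [← hab, pow_add, pow_one]
      ring
end

section
/- Let q = 2^(2n+1) with n ≥ 1 and θ = 2^(n+1). Then the additive subgroup of F_q generated by all elements of the form x·y^θ + x^θ·y, with x, y ∈ F_q, equals all of F_q. -/
theorem addClosure_commutator_values_eq_top (n : ℕ) (hn : 1 ≤ n)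
    (F : Type*) [Field F] [Fintype F] (hcard : Fintype.card F = 2 ^ (2 * n + 1)) :
    AddSubgroup.closure
        {z : F | ∃ x y : F, z = x * y ^ (2 ^ (n + 1)) + x ^ (2 ^ (n + 1)) * y} = ⊤ := by
  classical
  set θ : ℕ := 2 ^ (n + 1) with hθ
  set S : Set F := {z : F | ∃ x y : F, z = x * y ^ θ + x ^ θ * y} with hS
  have hsqZ : (2:ℤ) ^ (n + 1) * 2 ^ (n + 1) = 2 * 2 ^ (2 * n + 1) := by
    rw [← pow_add, ← pow_succ']; ring_nf
  -- coprimality of θ+1 and q-1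
  have hcop : (Fintype.card F - 1).Coprime (θ + 1) := by
    have h1 : 1 ≤ 2 ^ (n + 1) := Nat.one_le_two_pow
    have h2 : 1 ≤ 2 ^ (2 * n + 1) := Nat.one_le_two_pow
    have hkey : (2 ^ (n + 1) + 1) * (2 ^ (n + 1) - 1) = 2 * (2 ^ (2 * n + 1) - 1) + 1 := by
      zify [h1, h2]
      linear_combination hsqZ
    rw [hcard]
    have hd1 := Nat.gcd_dvd_left (2 ^ (2 * n + 1) - 1) (θ + 1)
    have hd2 := Nat.gcd_dvd_right (2 ^ (2 * n + 1) - 1) (θ + 1)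
    have hdvd : Nat.gcd (2 ^ (2 * n + 1) - 1) (θ + 1) ∣ 1 := by
      have hA : Nat.gcd (2 ^ (2 * n + 1) - 1) (θ + 1) ∣ 2 * (2 ^ (2 * n + 1) - 1) + 1 := by
        rw [← hkey]; exact Dvd.dvd.mul_right hd2 _
      have hB : Nat.gcd (2 ^ (2 * n + 1) - 1) (θ + 1) ∣ 2 * (2 ^ (2 * n + 1) - 1) :=
        Dvd.dvd.mul_left hd1 2
      have := Nat.dvd_sub hA hB
      simpa using this
    exact Nat.dvd_one.mp hdvd
  -- every element is a (θ+1)-st power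
  have hpow : ∀ c : F, ∃ d : F, d ^ (θ + 1) = c := by
    intro c
    rcases eq_or_ne c 0 with rfl | hc
    · exact ⟨0, by simp⟩
    · have hcop' : (Nat.card Fˣ).Coprime (θ + 1) := by
        rwa [Nat.card_eq_fintype_card, Fintype.card_units]
      obtain ⟨u, hu⟩ := (powCoprime hcop').surjective (Units.mk0 c hc)
      rw [powCoprime_apply] at hu
      exact ⟨(u : F), by rw [← Units.val_pow_eq_pow_val, hu, Units.val_mk0]⟩
  -- closure is closed under multiplication
  have hmul : ∀ c : F, ∀ z ∈ AddSubgroup.closure S, c * z ∈ AddSubgroup.closure S := by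
    intro c z hz
    induction hz using AddSubgroup.closure_induction with
    | mem w hw =>
        obtain ⟨x, y, rfl⟩ := hw
        obtain ⟨d, rfl⟩ := hpow c
        refine AddSubgroup.subset_closure ⟨d * x, d * y, ?_⟩
        rw [mul_pow, mul_pow]
        ring
    | zero => rw [mul_zero]; exact AddSubgroup.zero_mem _
    | add a b _ _ ha hb => rw [mul_add]; exact AddSubgroup.add_mem _ ha hb
    | neg a _ ha => rw [mul_neg]; exact AddSubgroup.neg_mem _ ha
  -- build an ideal
  let I : Ideal F :=
    { carrier := AddSubgroup.closure S
      add_mem' := fun ha hb => AddSubgroup.add_mem _ ha hb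
      zero_mem' := AddSubgroup.zero_mem _
      smul_mem' := fun c z hz => hmul c z hz }
  have hbig : (2 : ℕ) < Fintype.card F := by
    rw [hcard]
    calc (2:ℕ) < 2 ^ 3 := by norm_num
    _ ≤ 2 ^ (2 * n + 1) := Nat.pow_le_pow_right (by norm_num) (by omega)
  -- an element with a^θ ≠ a
  have hex : ∃ a : F, a ^ θ ≠ a := by
    by_contra h
    push_neg at h
    have hsq : ∀ a : F, a ^ 2 = a := by
      intro a
      have h2 : a ^ (θ * θ) = a := by rw [pow_mul, h a, h a]
      have hθθ : θ * θ = 2 ^ (2 * n + 1) * 2 := by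
        rw [hθ, ← pow_add, ← pow_succ]; ring_nf
      rw [hθθ, pow_mul, ← hcard, FiniteField.pow_card] at h2
      exact h2
    have hsub : (Finset.univ : Finset F) ⊆ ({0, 1} : Finset F) := by
      intro a _
      have : a * (a - 1) = 0 := by linear_combination (hsq a)
      rcases mul_eq_zero.mp this with h0 | h1
      · simp [h0]
      · simp [sub_eq_zero.mp h1]
    have hle := Finset.card_le_card hsub
    have hcd : ({0, 1} : Finset F).card ≤ 2 :=
      (Finset.card_insert_le _ _).trans (by simp)
    have : Fintype.card F ≤ 2 := le_trans (by simpa using hle) hcd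
    omega
  obtain ⟨a, ha⟩ := hex
  have hw : (a + a ^ θ) ∈ S := ⟨a, 1, by simp⟩
  have hchar2 : CharP F 2 := by
    haveI := ringChar.charP F
    obtain ⟨k, hp, hc⟩ := FiniteField.card F (ringChar F)
    have hdvd : ringChar F ∣ 2 ^ (2 * n + 1) := by
      rw [← hcard, hc]
      exact dvd_pow_self _ k.pos.ne'
    have hrc : ringChar F = 2 :=
      (Nat.prime_dvd_prime_iff_eq hp Nat.prime_two).mp (hp.dvd_of_dvd_pow hdvd)
    exact hrc ▸ ringChar.charP F
  have hwne : a + a ^ θ ≠ 0 := by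
    intro h0
    haveI := hchar2
    apply ha
    have hneg : a ^ θ = -a := by linear_combination h0
    rw [hneg, CharTwo.neg_eq]
  have hI : I = ⊤ := by
    rcases I.eq_bot_or_top with hbot | htop
    · exfalso
      have hmem : (a + a ^ θ) ∈ I := AddSubgroup.subset_closure hw
      rw [hbot] at hmem
      exact hwne (Ideal.mem_bot.mp hmem)
    · exact htop
  rw [AddSubgroup.eq_top_iff']
  intro z
  have : z ∈ I := hI ▸ Submodule.mem_top
  exact this
end

section
/- Let {G_n} be a family of finite groups, p a fixed prime dividing each |G_n|, such that (1) distinct Sylow p-subgroups of G_n intersect trivially, (2) the number of Sylow p-subgroups of G_n tends to infinity, and (3) the proportion |E_n|/|s(G_n)| tends to 1, where E_n is the set of nontrivial p-subgroups of G_n and s(G_n) the set of all subgroups. Then the subgroup permutability degree p(G_n) = |{(H,K) ∈ s(G_n)² : HK = KH}| / |s(G_n)|² tends to 0 as n → ∞. -/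
open Pointwise Filter

section Helpers

variable {p : ℕ} {G : Type*} [Group G]

/-- If `H` and `K` permute, then `H * K` is the carrier of `H ⊔ K`. -/
lemma coe_sup_of_mul_comm {H K : Subgroup G}
    (h : (H : Set G) * (K : Set G) = (K : Set G) * (H : Set G)) :
    ((H ⊔ K : Subgroup G) : Set G) = (H : Set G) * (K : Set G) := by
  have key : ∃ J : Subgroup G, (J : Set G) = (H : Set G) * (K : Set G) := by
    refine ⟨{ carrier := (H : Set G) * (K : Set G)
              one_mem' := ⟨1, H.one_mem, 1, K.one_mem, one_mul 1⟩
              mul_mem' := ?_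
              inv_mem' := ?_ }, rfl⟩
    · rintro x y ⟨a, ha, b, hb, rfl⟩ ⟨c, hc, d, hd, rfl⟩
      have hbc : b * c ∈ (K : Set G) * (H : Set G) := ⟨b, hb, c, hc, rfl⟩
      rw [← h] at hbc
      obtain ⟨e, he, f, hf, hef⟩ := hbc
      refine ⟨a * e, mul_mem ha he, f * d, mul_mem hf hd, ?_⟩
      calc a * e * (f * d) = a * (e * f) * d := by group
        _ = a * (b * c) * d := by
              have hef' : e * f = b * c := hef
              rw [hef']
        _ = a * b * (c * d) := by group
    · rintro x ⟨a, ha, b, hb, rfl⟩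
      have : (a * b)⁻¹ ∈ (K : Set G) * (H : Set G) :=
        ⟨b⁻¹, inv_mem hb, a⁻¹, inv_mem ha, (mul_inv_rev a b).symm⟩
      rwa [← h] at this
  obtain ⟨J, hJ⟩ := key
  have hHK : H ⊔ K = J := by
    apply le_antisymm
    · refine sup_le (fun a ha => ?_) (fun b hb => ?_)
      · show a ∈ (J : Set G); rw [hJ]; exact ⟨a, ha, 1, K.one_mem, mul_one a⟩
      · show b ∈ (J : Set G); rw [hJ]; exact ⟨1, H.one_mem, b, hb, one_mul b⟩
    · intro x hx
      have : x ∈ (J : Set G) := hx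
      rw [hJ] at this
      obtain ⟨a, ha, b, hb, rfl⟩ := this
      exact mul_mem (le_sup_left (a := H) ha) (le_sup_right (b := K) hb)
  rw [hHK, hJ]

/-- The cardinality of the image of `H` in `G ⧸ K` divides the cardinality of `H`. -/
lemma card_image_quotient_dvd [Finite G] (H K : Subgroup G) :
    Nat.card ((H : Set G).image ((↑) : G → G ⧸ K) : Set (G ⧸ K)) ∣ Nat.card H := by
  classical
  have horb : (H : Set G).image ((↑) : G → G ⧸ K)
      = MulAction.orbit H ((1 : G) : G ⧸ K) := by
    ext q
    simp only [Set.mem_image, MulAction.mem_orbit_iff, SetLike.mem_coe]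
    have key : ∀ (x : G) (hx : x ∈ H), (⟨x, hx⟩ : H) • ((1 : G) : G ⧸ K) = (x : G ⧸ K) := by
      intro x hx
      show x • ((1 : G) : G ⧸ K) = (x : G ⧸ K)
      rw [MulAction.Quotient.smul_mk]
      simp
    constructor
    · rintro ⟨x, hx, rfl⟩
      exact ⟨⟨x, hx⟩, key x hx⟩
    · rintro ⟨⟨x, hx⟩, rfl⟩
      exact ⟨x, hx, (key x hx).symm⟩
  rw [horb]
  letI : Fintype H := Fintype.ofFinite H
  letI : Fintype (MulAction.orbit H ((1 : G) : G ⧸ K)) := Fintype.ofFinite _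
  letI : Fintype (MulAction.stabilizer H ((1 : G) : G ⧸ K)) := Fintype.ofFinite _
  rw [Nat.card_eq_fintype_card, Nat.card_eq_fintype_card]
  exact ⟨_, (MulAction.card_orbit_mul_card_stabilizer_eq_card_group H _).symm⟩

/-- A permuting product of `p`-subgroups is a `p`-group. -/
lemma isPGroup_sup_of_mul_comm [Finite G] (hp : p.Prime) {H K : Subgroup G}
    (hH : IsPGroup p H) (hK : IsPGroup p K)
    (h : (H : Set G) * (K : Set G) = (K : Set G) * (H : Set G)) :
    IsPGroup p (H ⊔ K : Subgroup G) := by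
  haveI : Fact p.Prime := ⟨hp⟩
  have hcard : Nat.card (H ⊔ K : Subgroup G)
      = Nat.card ((H : Set G) * (K : Set G) : Set G) := by
    rw [← coe_sup_of_mul_comm h]
    rfl
  have hmul := Subgroup.card_mul_eq_card_subgroup_mul_card_quotient K (H : Set G)
  have hdvd1 := card_image_quotient_dvd H K
  obtain ⟨a, ha⟩ := IsPGroup.iff_card.mp hH
  obtain ⟨b, hb⟩ := IsPGroup.iff_card.mp hK
  have hdvd : Nat.card (H ⊔ K : Subgroup G) ∣ p ^ (b + a) := by
    rw [hcard, hmul, pow_add, ← ha, ← hb]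
    exact mul_dvd_mul_left _ hdvd1
  obtain ⟨m, -, hm⟩ := (Nat.dvd_prime_pow hp).mp hdvd
  exact IsPGroup.iff_card.mpr ⟨m, hm⟩

/-- Under the TI hypothesis, a nontrivial `p`-subgroup lies in a unique Sylow subgroup. -/
lemma sylow_unique
    (hTI : ∀ P Q : Sylow p G, (P : Subgroup G) ≠ (Q : Subgroup G) →
      (P : Subgroup G) ⊓ (Q : Subgroup G) = ⊥)
    {X : Subgroup G} (hX : X ≠ ⊥) {P Q : Sylow p G}
    (hP : X ≤ P) (hQ : X ≤ Q) : P = Q := by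
  by_contra hne
  have hne' : (P : Subgroup G) ≠ (Q : Subgroup G) := fun h => hne (Sylow.ext h)
  exact hX (le_bot_iff.mp (hTI P Q hne' ▸ le_inf hP hQ))

variable (p G) in
/-- The key counting estimate. -/
lemma card_perm_p_pairs_mul_card_sylow_le [Finite G] (hp : p.Prime)
    (hTI : ∀ P Q : Sylow p G, (P : Subgroup G) ≠ (Q : Subgroup G) →
      (P : Subgroup G) ⊓ (Q : Subgroup G) = ⊥) :
    Nat.card {HK : Subgroup G × Subgroup G //
        ((HK.1 : Set G) * (HK.2 : Set G) = (HK.2 : Set G) * (HK.1 : Set G)) ∧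
        (HK.1 ≠ ⊥ ∧ IsPGroup p HK.1) ∧ (HK.2 ≠ ⊥ ∧ IsPGroup p HK.2)} *
      Nat.card (Sylow p G) ≤
    Nat.card {H : Subgroup G // H ≠ ⊥ ∧ IsPGroup p H} ^ 2 := by
  classical
  haveI : Fact p.Prime := ⟨hp⟩
  haveI : Finite (Sylow p G) :=
    Finite.of_injective (fun P : Sylow p G => (P : Subgroup G)) (fun P Q h => Sylow.ext h)
  -- the unique Sylow containing a nontrivial p-subgroup
  choose U hU using
    fun X : {H : Subgroup G // H ≠ ⊥ ∧ IsPGroup p H} => X.2.2.exists_le_sylow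
  have hUuniq : ∀ (X : {H : Subgroup G // H ≠ ⊥ ∧ IsPGroup p H}) (R : Sylow p G),
      X.1 ≤ R → R = U X :=
    fun X R hR => sylow_unique hTI X.2.1 hR (hU X)
  -- conjugating elements between Sylow subgroups
  choose c hc using fun P Q : Sylow p G => MulAction.exists_smul_eq G P Q
  -- facts about the conjugation action on subgroups
  have smul_ne_bot : ∀ (g : G) (X : Subgroup G), X ≠ ⊥ → MulAut.conj g • X ≠ ⊥ := by
    intro g X hX h
    apply hX
    have := congrArg (fun Y => (MulAut.conj g)⁻¹ • Y) h
    simpa [inv_smul_smul, Subgroup.smul_bot] using this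
  have smul_pgroup : ∀ (g : G) (X : Subgroup G), IsPGroup p X →
      IsPGroup p (MulAut.conj g • X : Subgroup G) := by
    intro g X hX
    rw [Subgroup.pointwise_smul_def]
    exact hX.map _
  -- the second component of a permuting pair lies in the same Sylow as the first
  have hYle : ∀ a : {HK : Subgroup G × Subgroup G //
        ((HK.1 : Set G) * (HK.2 : Set G) = (HK.2 : Set G) * (HK.1 : Set G)) ∧
        (HK.1 ≠ ⊥ ∧ IsPGroup p HK.1) ∧ (HK.2 ≠ ⊥ ∧ IsPGroup p HK.2)},
      a.1.2 ≤ (U ⟨a.1.1, a.2.2.1⟩ : Subgroup G) := by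
    intro a
    obtain ⟨R, hR⟩ :=
      (isPGroup_sup_of_mul_comm hp a.2.2.1.2 a.2.2.2.2 a.2.1).exists_le_sylow
    have hXR : a.1.1 ≤ R := le_trans le_sup_left hR
    have hRU := hUuniq ⟨a.1.1, a.2.2.1⟩ R hXR
    exact hRU ▸ (le_trans le_sup_right hR)
  -- the injection
  set Φ : {HK : Subgroup G × Subgroup G //
        ((HK.1 : Set G) * (HK.2 : Set G) = (HK.2 : Set G) * (HK.1 : Set G)) ∧
        (HK.1 ≠ ⊥ ∧ IsPGroup p HK.1) ∧ (HK.2 ≠ ⊥ ∧ IsPGroup p HK.2)} × Sylow p G →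
      {H : Subgroup G // H ≠ ⊥ ∧ IsPGroup p H} × {H : Subgroup G // H ≠ ⊥ ∧ IsPGroup p H} :=
    fun aQ => (⟨aQ.1.1.1, aQ.1.2.2.1⟩,
      ⟨MulAut.conj (c (U ⟨aQ.1.1.1, aQ.1.2.2.1⟩) aQ.2) • aQ.1.1.2,
        smul_ne_bot _ _ aQ.1.2.2.2.1, smul_pgroup _ _ aQ.1.2.2.2.2⟩) with hΦ
  -- the image's second component lies in Q
  have hsnd : ∀ aQ, (Φ aQ).2.1 ≤ (aQ.2 : Subgroup G) := by
    intro ⟨a, Q⟩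
    have h1 : MulAut.conj (c (U ⟨a.1.1, a.2.2.1⟩) Q) • a.1.2 ≤
        MulAut.conj (c (U ⟨a.1.1, a.2.2.1⟩) Q) • (U ⟨a.1.1, a.2.2.1⟩ : Subgroup G) :=
      Subgroup.pointwise_smul_le_pointwise_smul_iff.mpr (hYle a)
    have h2 : MulAut.conj (c (U ⟨a.1.1, a.2.2.1⟩) Q) • (U ⟨a.1.1, a.2.2.1⟩ : Subgroup G)
        = ((c (U ⟨a.1.1, a.2.2.1⟩) Q • U ⟨a.1.1, a.2.2.1⟩ : Sylow p G) : Subgroup G) := rfl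
    rw [hΦ]
    exact le_trans h1 (le_of_eq (by rw [h2, hc]))
  have hinj : Function.Injective Φ := by
    rintro ⟨a, Q⟩ ⟨a', Q'⟩ h
    have h1 : a.1.1 = a'.1.1 := congrArg (fun x => (x.1.1 : Subgroup G)) h
    have hQ : Q = Q' := by
      have e2 : (Φ (a, Q)).2 = (Φ (a', Q')).2 := congrArg Prod.snd h
      have hq1 : Q = U (Φ (a, Q)).2 := hUuniq _ _ (hsnd (a, Q))
      have hq2 : Q' = U (Φ (a', Q')).2 := hUuniq _ _ (hsnd (a', Q'))
      rw [hq1, hq2, e2]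
    have hX : (⟨a.1.1, a.2.2.1⟩ : {H : Subgroup G // H ≠ ⊥ ∧ IsPGroup p H})
        = ⟨a'.1.1, a'.2.2.1⟩ := Subtype.ext h1
    have h2 : MulAut.conj (c (U ⟨a.1.1, a.2.2.1⟩) Q) • a.1.2
        = MulAut.conj (c (U ⟨a'.1.1, a'.2.2.1⟩) Q') • a'.1.2 := by
      have := congrArg (fun x => (x.2.1 : Subgroup G)) h
      simpa [hΦ] using this
    rw [← hX, ← hQ] at h2
    have h3 : a.1.2 = a'.1.2 := smul_left_cancel _ h2
    have : a = a' := Subtype.ext (Prod.ext h1 h3)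
    rw [this, hQ]
  have hcard := Nat.card_le_card_of_injective Φ hinj
  rw [Nat.card_prod, Nat.card_prod] at hcard
  rw [sq]
  exact hcard

variable (p G) in
lemma perm_ratio_bound [Finite G] (hp : p.Prime)
    (hTI : ∀ P Q : Sylow p G, (P : Subgroup G) ≠ (Q : Subgroup G) →
      (P : Subgroup G) ⊓ (Q : Subgroup G) = ⊥) :
    (Nat.card {HK : Subgroup G × Subgroup G //
        (HK.1 : Set G) * (HK.2 : Set G) = (HK.2 : Set G) * (HK.1 : Set G)} : ℝ) /
      (Nat.card (Subgroup G) : ℝ) ^ 2 ≤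
    1 / (Nat.card (Sylow p G) : ℝ) +
      (1 - ((Nat.card {H : Subgroup G // H ≠ ⊥ ∧ IsPGroup p H} : ℝ) /
        (Nat.card (Subgroup G) : ℝ)) ^ 2) := by
  classical
  haveI : Fact p.Prime := ⟨hp⟩
  haveI : Finite (Sylow p G) :=
    Finite.of_injective (fun P : Sylow p G => (P : Subgroup G)) (fun P Q h => Sylow.ext h)
  set perm : Subgroup G × Subgroup G → Prop :=
    fun HK => (HK.1 : Set G) * (HK.2 : Set G) = (HK.2 : Set G) * (HK.1 : Set G) with hperm
  set bothE : Subgroup G × Subgroup G → Prop :=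
    fun HK => (HK.1 ≠ ⊥ ∧ IsPGroup p HK.1) ∧ (HK.2 ≠ ⊥ ∧ IsPGroup p HK.2) with hbothE
  set t := Nat.card {HK : Subgroup G × Subgroup G // perm HK} with ht
  set a := Nat.card {HK : Subgroup G × Subgroup G // perm HK ∧ bothE HK} with hA
  set s := Nat.card (Subgroup G) with hs
  set e := Nat.card {H : Subgroup G // H ≠ ⊥ ∧ IsPGroup p H} with he
  set k := Nat.card (Sylow p G) with hk
  -- the count of pairs with both components nontrivial p-subgroups
  have hboth : Nat.card {HK : Subgroup G × Subgroup G // bothE HK} = e ^ 2 := by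
    have h := Nat.card_congr
      (Equiv.subtypeProdEquivProd (p := fun H : Subgroup G => H ≠ ⊥ ∧ IsPGroup p H)
        (q := fun H : Subgroup G => H ≠ ⊥ ∧ IsPGroup p H))
    rw [Nat.card_prod] at h
    rw [he, sq]
    exact h
  -- splitting permuting pairs
  have hsplit : t ≤ a + Nat.card {HK : Subgroup G × Subgroup G // perm HK ∧ ¬ bothE HK} := by
    have hinj : Function.Injective
        (fun x : {HK : Subgroup G × Subgroup G // perm HK} =>
          if h : bothE x.1 then
            (Sum.inl ⟨x.1, x.2, h⟩ : {HK // perm HK ∧ bothE HK} ⊕ {HK // perm HK ∧ ¬ bothE HK})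
          else Sum.inr ⟨x.1, x.2, h⟩) := by
      intro x y hxy
      apply Subtype.ext
      beta_reduce at hxy
      by_cases hbx : bothE x.1 <;> by_cases hby : bothE y.1
      · rw [dif_pos hbx, dif_pos hby] at hxy
        injection hxy with h
        have h2 := Subtype.ext_iff.mp h
        exact h2
      · rw [dif_pos hbx, dif_neg hby] at hxy
        exact absurd hxy (by simp)
      · rw [dif_neg hbx, dif_pos hby] at hxy
        exact absurd hxy (by simp)
      · rw [dif_neg hbx, dif_neg hby] at hxy
        injection hxy with h
        have h2 := Subtype.ext_iff.mp h
        exact h2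
    have := Nat.card_le_card_of_injective _ hinj
    rwa [Nat.card_sum] at this
  have hmono : Nat.card {HK : Subgroup G × Subgroup G // perm HK ∧ ¬ bothE HK} ≤
      Nat.card {HK : Subgroup G × Subgroup G // ¬ bothE HK} :=
    Nat.card_le_card_of_injective (fun x => ⟨x.1, x.2.2⟩) (by
      intro x y hxy
      beta_reduce at hxy
      apply Subtype.ext
      have h2 := Subtype.ext_iff.mp hxy
      exact h2)
  have hcompl : Nat.card {HK : Subgroup G × Subgroup G // bothE HK} +
      Nat.card {HK : Subgroup G × Subgroup G // ¬ bothE HK} = s ^ 2 := by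
    rw [hs, ← Nat.card_sum, Nat.card_congr (Equiv.sumCompl bothE), Nat.card_prod, sq]
  -- main nat inequality : t + e^2 ≤ a + s^2
  have hnat : t + e ^ 2 ≤ a + s ^ 2 := by
    rw [← hcompl, hboth]
    omega
  -- counting estimate
  have hcount : a * k ≤ e ^ 2 := card_perm_p_pairs_mul_card_sylow_le p G hp hTI
  -- basic bounds
  have hs1 : 1 ≤ s := Nat.card_pos
  have hk1 : 1 ≤ k := Nat.card_pos
  have hes : e ≤ s := Finite.card_subtype_le _
  -- pass to the reals
  have hS0 : (0 : ℝ) < (s : ℝ) := by exact_mod_cast hs1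
  have hK0 : (0 : ℝ) < (k : ℝ) := by exact_mod_cast hk1
  have hES : (e : ℝ) ≤ (s : ℝ) := by exact_mod_cast hes
  have h1 : (t : ℝ) + (e : ℝ) ^ 2 ≤ (a : ℝ) + (s : ℝ) ^ 2 := by exact_mod_cast hnat
  have h2 : (a : ℝ) * (k : ℝ) ≤ (e : ℝ) ^ 2 := by exact_mod_cast hcount
  have hA2 : (a : ℝ) ≤ (e : ℝ) ^ 2 / (k : ℝ) := (le_div_iff₀ hK0).mpr h2
  have hE2 : (e : ℝ) ^ 2 ≤ (s : ℝ) ^ 2 := by nlinarith [Nat.cast_nonneg (α := ℝ) e]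
  have key : (t : ℝ) ≤ (s : ℝ) ^ 2 / (k : ℝ) + (s : ℝ) ^ 2 - (e : ℝ) ^ 2 := by
    have h3 : (e : ℝ) ^ 2 / (k : ℝ) ≤ (s : ℝ) ^ 2 / (k : ℝ) := by gcongr
    linarith
  have hEq : 1 / (k : ℝ) + (1 - ((e : ℝ) / (s : ℝ)) ^ 2)
      = ((s : ℝ) ^ 2 / (k : ℝ) + (s : ℝ) ^ 2 - (e : ℝ) ^ 2) / (s : ℝ) ^ 2 := by
    field_simp
    ring
  rw [hEq]
  gcongr

end Helpers

theorem subgroup_permutability_degree_tendsto_zero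
    (p : ℕ) (hp : p.Prime)
    (G : ℕ → Type*) [∀ n, Group (G n)] [∀ n, Finite (G n)]
    (hdvd : ∀ n, p ∣ Nat.card (G n))
    (hTI : ∀ n, ∀ P Q : Sylow p (G n),
      (P : Subgroup (G n)) ≠ (Q : Subgroup (G n)) →
        (P : Subgroup (G n)) ⊓ (Q : Subgroup (G n)) = ⊥)
    (hSyl : Tendsto (fun n => Nat.card (Sylow p (G n))) atTop atTop)
    (hE : Tendsto
      (fun n =>
        (Nat.card {H : Subgroup (G n) // H ≠ ⊥ ∧ IsPGroup p H} : ℝ) /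
          (Nat.card (Subgroup (G n)) : ℝ))
      atTop (nhds 1)) :
    Tendsto
      (fun n =>
        (Nat.card {HK : Subgroup (G n) × Subgroup (G n) //
            (HK.1 : Set (G n)) * (HK.2 : Set (G n)) = (HK.2 : Set (G n)) * (HK.1 : Set (G n))} : ℝ) /
          ((Nat.card (Subgroup (G n)) : ℝ)) ^ 2)
      atTop (nhds 0) := by
  have hbound : ∀ n,
      (Nat.card {HK : Subgroup (G n) × Subgroup (G n) //
          (HK.1 : Set (G n)) * (HK.2 : Set (G n)) = (HK.2 : Set (G n)) * (HK.1 : Set (G n))} : ℝ) /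
        ((Nat.card (Subgroup (G n)) : ℝ)) ^ 2 ≤
      1 / (Nat.card (Sylow p (G n)) : ℝ) +
        (1 - ((Nat.card {H : Subgroup (G n) // H ≠ ⊥ ∧ IsPGroup p H} : ℝ) /
          (Nat.card (Subgroup (G n)) : ℝ)) ^ 2) :=
    fun n => perm_ratio_bound p (G n) hp (hTI n)
  have h0 : ∀ n, (0 : ℝ) ≤
      (Nat.card {HK : Subgroup (G n) × Subgroup (G n) //
          (HK.1 : Set (G n)) * (HK.2 : Set (G n)) = (HK.2 : Set (G n)) * (HK.1 : Set (G n))} : ℝ) /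
        ((Nat.card (Subgroup (G n)) : ℝ)) ^ 2 :=
    fun n => by positivity
  have h1 : Tendsto (fun n => (Nat.card (Sylow p (G n)) : ℝ)) atTop atTop :=
    tendsto_natCast_atTop_atTop.comp hSyl
  have h2 : Tendsto (fun n => 1 / (Nat.card (Sylow p (G n)) : ℝ)) atTop (nhds 0) := by
    simp only [one_div]
    exact h1.inv_tendsto_atTop
  have h3 := hE.pow 2
  have h4 : Tendsto (fun n =>
      (1 : ℝ) - ((Nat.card {H : Subgroup (G n) // H ≠ ⊥ ∧ IsPGroup p H} : ℝ) /
        (Nat.card (Subgroup (G n)) : ℝ)) ^ 2) atTop (nhds 0) := by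
    have := (tendsto_const_nhds (x := (1 : ℝ)) (f := atTop)).sub h3
    simpa using this
  have hb := h2.add h4
  rw [add_zero] at hb
  exact tendsto_of_tendsto_of_tendsto_of_le_of_le tendsto_const_nhds hb h0 hbound
end
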